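/- Let F be the CDF on [1, K] defined in Example 'all fair mech irregular': F(v) = (v−1)/v for v ∈ [1, v†], F(v) = 1 − ln(K)/((v/K + √(ln K) − 1)·K) for v ∈ [v†, K], F(v) = 1 for v > K, where v† = K/(√(ln K) + 1). Then the monopoly revenue max_p p·(1 − F(p)) equals √(ln K), achieved at price p = K. -/

import Mathlib

/-- for the (non-regular) distribution of Example `all fair mech irregular`,
with `v† = K/(√(ln K) + 1)`, CDF `F(v) = (v−1)/v` on `[1, v†]`,
`F(v) = 1 − ln(K)/((v/K + √(ln K) − 1)·K)` on `(v†, K]` and `F(v) = 1` beyond `K`,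
the monopoly revenue `max_{p ∈ [1,K]} p·(1 − F p)` equals `√(ln K)`, attained at `p = K`. -/
theorem irregular_example_monopoly_revenue
    (K : ℝ) (hK : Real.exp 1 ≤ K)
    (vd : ℝ) (hvd : vd = K / (Real.sqrt (Real.log K) + 1))
    (F : ℝ → ℝ)
    (hF : ∀ v, F v =
      if v ≤ vd then (v - 1) / v
      else if v ≤ K then 1 - Real.log K / ((v / K + Real.sqrt (Real.log K) - 1) * K)
      else 1) :
    IsGreatest {r : ℝ | ∃ p ∈ Set.Icc (1 : ℝ) K, r = p * (1 - F p)}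
        (Real.sqrt (Real.log K)) ∧
      K * (1 - F K) = Real.sqrt (Real.log K) := by
  have hK0 : (0:ℝ) < K := lt_of_lt_of_le (Real.exp_pos 1) hK
  have hlog : (1:ℝ) ≤ Real.log K := (Real.le_log_iff_exp_le hK0).2 hK
  set s := Real.sqrt (Real.log K) with hs
  have hs1 : (1:ℝ) ≤ s := by
    rw [hs, show (1:ℝ) = Real.sqrt 1 by simp]
    exact Real.sqrt_le_sqrt hlog
  have hs0 : (0:ℝ) < s := lt_of_lt_of_le one_pos hs1
  have hssq : s * s = Real.log K := Real.mul_self_sqrt (by linarith)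
  have hK1 : (1:ℝ) ≤ K := by
    have := Real.add_one_le_exp 1
    linarith
  have hvdK : vd < K := by
    rw [hvd, div_lt_iff₀ (by linarith)]
    nlinarith
  have hFK : K * (1 - F K) = s := by
    rw [hF K, if_neg (by linarith), if_pos le_rfl]
    have hKK : K / K = 1 := div_self hK0.ne'
    rw [hKK, ← hssq]
    have hsK : (1 + s - 1) * K = s * K := by ring
    rw [hsK]
    field_simp
    ring
  refine ⟨⟨⟨K, ⟨hK1, le_rfl⟩, hFK.symm⟩, ?_⟩, hFK⟩
  rintro r ⟨p, ⟨hp1, hpK⟩, rfl⟩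
  rw [hF p]
  by_cases h : p ≤ vd
  · rw [if_pos h]
    have hp0 : (0:ℝ) < p := by linarith
    have : p * (1 - (p - 1) / p) = 1 := by field_simp; ring
    rw [this]; exact hs1
  · rw [if_neg h, if_pos hpK]
    have hD : (p / K + s - 1) * K = p + (s - 1) * K := by field_simp; ring
    have hDpos : (0:ℝ) < p + (s - 1) * K := by nlinarith
    rw [hD, ← hssq]
    have heq : p * (1 - (1 - s * s / (p + (s - 1) * K))) =
        p * s * s / (p + (s - 1) * K) := by
      field_simp; ring
    rw [heq, div_le_iff₀ hDpos]
    nlinarith [mul_nonneg (mul_nonneg hs0.le (by linarith : (0:ℝ) ≤ s - 1))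
      (by linarith : (0:ℝ) ≤ K - p)]
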